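/- If U: ℝ → ℝ is finite-valued, non-decreasing, bounded from below, and lim_{w→+∞} U(w) = +∞, then sup_{x∈ℝ^d} E[U(W(x))] = +∞. -/

import Mathlib

open MeasureTheory ProbabilityTheory Filter Matrix
open scoped ENNReal NNReal Topology

noncomputable section

/-- Signed expectation with values in `EReal`. -/
def eexp {Ω : Type*} [MeasurableSpace Ω] (P : Measure Ω) (f : Ω → ℝ) : EReal :=
  ((∫⁻ ω, ENNReal.ofReal (f ω) ∂P : ℝ≥0∞) : EReal) -
    ((∫⁻ ω, ENNReal.ofReal (-(f ω)) ∂P : ℝ≥0∞) : EReal)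

/-- NMVM return vector `X = μ + γ Z + √Z A N`. -/
def nmvmX {Ω : Type*} {d : ℕ} (μ γ : Fin d → ℝ) (A : Matrix (Fin d) (Fin d) ℝ)
    (Z : Ω → ℝ) (N : Ω → Fin d → ℝ) (ω : Ω) : Fin d → ℝ :=
  fun i => μ i + γ i * Z ω + Real.sqrt (Z ω) * (A *ᵥ N ω) i

/-- Next-period wealth `W(x) = W₀(1+r_f) + W₀ xᵀ(X − 𝟏 r_f)` of portfolio `x`. -/
def wealth {Ω : Type*} {d : ℕ} (μ γ : Fin d → ℝ) (A : Matrix (Fin d) (Fin d) ℝ)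
    (Z : Ω → ℝ) (N : Ω → Fin d → ℝ) (rf W0 : ℝ) (x : Fin d → ℝ) (ω : Ω) : ℝ :=
  W0 * (1 + rf) + W0 * ∑ i, x i * (nmvmX μ γ A Z N ω i - rf)

lemma gauss_pos (t : ℝ) : 0 < gaussianReal 0 1 (Set.Icc t (t + 1)) := by
  rw [gaussianReal_apply 0 one_ne_zero, setLIntegral_pos_iff (measurable_gaussianPDF 0 1)]
  have hsupp : Function.support (gaussianPDF 0 1) = Set.univ := by
    ext x
    simp [Function.support, (gaussianPDF_pos 0 one_ne_zero x).ne']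
  rw [hsupp, Set.univ_inter, Real.volume_Icc]
  simp

lemma sum_split {d : ℕ} (v g T μ : Fin d → ℝ) (z s rf : ℝ) (hμ : ∀ i, μ i = v i + rf) :
    ∑ i, v i * ((μ i + g i * z + s * T i) - rf)
      = (∑ i, v i * v i) + (∑ i, v i * g i) * z + s * ∑ i, v i * T i := by
  have h : ∀ i ∈ Finset.univ, v i * ((μ i + g i * z + s * T i) - rf)
      = v i * v i + v i * g i * z + s * (v i * T i) := by
    intro i _; rw [hμ i]; ring
  rw [Finset.sum_congr rfl h, Finset.sum_add_distrib, Finset.sum_add_distrib,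
    ← Finset.sum_mul, ← Finset.mul_sum]

lemma dot_swap {d : ℕ} (v : Fin d → ℝ) (A : Matrix (Fin d) (Fin d) ℝ) (n : Fin d → ℝ) :
    ∑ i, v i * (A *ᵥ n) i = ∑ j, (∑ i, v i * A i j) * n j := by
  simp only [Matrix.mulVec, dotProduct]
  calc ∑ i, v i * ∑ j, A i j * n j = ∑ i, ∑ j, (v i * A i j) * n j := by
        refine Finset.sum_congr rfl fun i _ => ?_
        rw [Finset.mul_sum]
        exact Finset.sum_congr rfl fun j _ => by ring
    _ = ∑ j, ∑ i, (v i * A i j) * n j := Finset.sum_comm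
    _ = ∑ j, (∑ i, v i * A i j) * n j := by
        refine Finset.sum_congr rfl fun j _ => ?_
        rw [Finset.sum_mul]

lemma qform_eq {d : ℕ} (v : Fin d → ℝ) (A : Matrix (Fin d) (Fin d) ℝ) :
    v ⬝ᵥ ((A * Aᵀ) *ᵥ v) = ∑ k, (∑ i, v i * A i k) * (∑ j, v j * A j k) := by
  simp only [Matrix.mulVec, dotProduct, Matrix.mul_apply, Matrix.transpose_apply]
  calc ∑ i, v i * ∑ j, (∑ k, A i k * A j k) * v j
      = ∑ i, ∑ k, ∑ j, (v i * A i k) * (v j * A j k) := by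
        refine Finset.sum_congr rfl fun i _ => ?_
        rw [Finset.mul_sum, Finset.sum_comm]
        refine Finset.sum_congr rfl fun j _ => ?_
        rw [Finset.sum_mul, Finset.mul_sum]
        exact Finset.sum_congr rfl fun k _ => by ring
    _ = ∑ k, ∑ i, ∑ j, (v i * A i k) * (v j * A j k) := Finset.sum_comm
    _ = ∑ k, (∑ i, v i * A i k) * (∑ j, v j * A j k) := by
        refine Finset.sum_congr rfl fun k _ => ?_
        rw [Finset.sum_mul]
        refine Finset.sum_congr rfl fun i _ => ?_
        rw [Finset.mul_sum]

/-- if `U` is finite-valued, non-decreasing, bounded from below and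
`U(w) → +∞` as `w → +∞`, then `sup_x E[U(W(x))] = +∞`. -/
theorem stmt16 {Ω : Type*} [MeasurableSpace Ω] (P : Measure Ω) [IsProbabilityMeasure P]
    {d : ℕ} (μ γ : Fin d → ℝ) (A : Matrix (Fin d) (Fin d) ℝ)
    (Z : Ω → ℝ) (N : Ω → Fin d → ℝ)
    (hZmeas : Measurable Z) (hNmeas : Measurable N)
    (hZnonneg : ∀ ω, 0 ≤ Z ω)
    (hNlaw : Measure.map N P = Measure.pi fun _ : Fin d => gaussianReal 0 1)
    (hindep : IndepFun Z N P)
    (hPD : (A * Aᵀ).PosDef)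
    (rf W0 : ℝ) (hW0 : 0 < W0)
    (hμrf : (fun i => μ i - rf) ≠ 0)
    (U : ℝ → ℝ) (hUmono : Monotone U) (hUbdd : BddBelow (Set.range U))
    (hUtop : Tendsto U atTop atTop) :
    (⨆ x : Fin d → ℝ, eexp P fun ω => U (wealth μ γ A Z N rf W0 x ω)) = ⊤ := by
  classical
  set v : Fin d → ℝ := fun i => μ i - rf with hvdef
  have hvne : v ≠ 0 := hμrf
  set a : ℝ := ∑ i, v i * v i with hadef
  have hapos : 0 < a := by
    obtain ⟨i, hi⟩ : ∃ i, v i ≠ 0 := by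
      by_contra h; push_neg at h; exact hvne (funext h)
    exact Finset.sum_pos' (fun j _ => mul_self_nonneg _)
      ⟨i, Finset.mem_univ i, mul_self_pos.mpr hi⟩
  set b : ℝ := ∑ i, v i * γ i with hbdef
  set w : Fin d → ℝ := fun j => ∑ i, v i * A i j with hwdef
  set S : Ω → ℝ := fun ω => ∑ j, w j * N ω j with hSdef
  set Y : Ω → ℝ := fun ω => ∑ i, v i * (nmvmX μ γ A Z N ω i - rf) with hYdef
  have hμv : ∀ i, μ i = v i + rf := fun i => by simp [hvdef]
  have hYeq : ∀ ω, Y ω = a + b * Z ω + Real.sqrt (Z ω) * S ω := by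
    intro ω
    have h1 : Y ω = a + b * Z ω + Real.sqrt (Z ω) * ∑ i, v i * (A *ᵥ N ω) i := by
      simpa [hYdef, nmvmX, hadef, hbdef] using
        sum_split v γ (fun i => (A *ᵥ N ω) i) μ (Z ω) (Real.sqrt (Z ω)) rf hμv
    rw [h1, dot_swap v A (N ω)]
  -- w ≠ 0, T > 0
  have hwq : v ⬝ᵥ ((A * Aᵀ) *ᵥ v) = ∑ k, w k * w k := qform_eq v A
  have hwpos : 0 < ∑ k, w k * w k := by
    have := hPD.dotProduct_mulVec_pos hvne
    simpa [hwq] using this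
  set T : ℝ := ∑ k, |w k| with hTdef
  have hTpos : 0 < T := by
    obtain ⟨k, -, hk⟩ := Finset.exists_lt_of_sum_lt (by simpa using hwpos :
      ∑ k : Fin d, (0:ℝ) < ∑ k, w k * w k)
    have hk' : w k ≠ 0 := by
      intro h; rw [h] at hk; simp at hk
    exact Finset.sum_pos' (fun j _ => abs_nonneg _)
      ⟨k, Finset.mem_univ k, abs_pos.mpr hk'⟩
  -- positivity of Gaussian box events
  have hNpi : ∀ t : Fin d → ℝ,
      0 < P (N ⁻¹' Set.pi Set.univ fun i => Set.Icc (t i) (t i + 1)) := by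
    intro t
    have hmeas : MeasurableSet (Set.pi Set.univ fun i => Set.Icc (t i) (t i + 1)) :=
      MeasurableSet.univ_pi fun i => measurableSet_Icc
    rw [← Measure.map_apply hNmeas hmeas, hNlaw, Measure.pi_pi]
    rw [CanonicallyOrderedAdd.prod_pos]
    exact fun i _ => gauss_pos (t i)
  -- find a positive-probability event where Y is bounded below by a positive ε
  obtain ⟨ε, hε, E, hEmeas, hPE, hYE⟩ :
      ∃ ε : ℝ, 0 < ε ∧ ∃ E : Set Ω, MeasurableSet E ∧ 0 < P E ∧ ∀ ω ∈ E, ε ≤ Y ω := by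
    have hcover : (⋃ n : ℕ, (Z ⁻¹' {0} ∪ Z ⁻¹' Set.Icc (1/((n:ℝ)+1)) ((n:ℝ)+1)))
        = Set.univ := by
      ext ω
      simp only [Set.mem_iUnion, Set.mem_union, Set.mem_preimage, Set.mem_singleton_iff,
        Set.mem_Icc, Set.mem_univ, iff_true]
      rcases eq_or_lt_of_le (hZnonneg ω) with h | h
      · exact ⟨0, Or.inl h.symm⟩
      · refine ⟨⌈max (1 / Z ω) (Z ω)⌉₊, Or.inr ⟨?_, ?_⟩⟩
        · have h1 : 1 / Z ω ≤ (⌈max (1 / Z ω) (Z ω)⌉₊ : ℝ) + 1 :=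
            le_trans (le_trans (le_max_left _ _) (Nat.le_ceil _)) (by linarith)
          rw [div_le_iff₀ h] at h1
          rw [div_le_iff₀ (by positivity)]
          linarith
        · exact le_trans (le_trans (le_max_right _ _) (Nat.le_ceil _)) (by linarith)
    obtain ⟨n, hn⟩ : ∃ n : ℕ,
        P (Z ⁻¹' {0} ∪ Z ⁻¹' Set.Icc (1/((n:ℝ)+1)) ((n:ℝ)+1)) ≠ 0 := by
      by_contra h
      push_neg at h
      have := measure_iUnion_null h
      rw [hcover] at this
      simp at this
    rcases Classical.em (P (Z ⁻¹' {0}) = 0) with h0 | h0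
    · -- Case B : the Icc event has positive probability
      have hIcc : 0 < P (Z ⁻¹' Set.Icc (1/((n:ℝ)+1)) ((n:ℝ)+1)) := by
        rcases Classical.em (P (Z ⁻¹' Set.Icc (1/((n:ℝ)+1)) ((n:ℝ)+1)) = 0) with h1 | h1
        · exact absurd (measure_union_null h0 h1) hn
        · exact pos_iff_ne_zero.mpr h1
      set k : ℝ := 1/((n:ℝ)+1) with hkdef
      set K : ℝ := (n:ℝ)+1 with hKdef
      have hkpos : 0 < k := by positivity
      have hKpos : 0 < K := by positivity
      have hsk : 0 < Real.sqrt k := Real.sqrt_pos.mpr hkpos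
      set q : ℝ := (1 + |b| * K - a) / (Real.sqrt k * T) with hqdef
      set s : ℝ := max 0 q with hsdef
      have hs0 : 0 ≤ s := le_max_left _ _
      set tt : Fin d → ℝ := fun i => if 0 ≤ w i then s else -s - 1 with httdef
      refine ⟨1, one_pos,
        Z ⁻¹' Set.Icc k K ∩ N ⁻¹' Set.pi Set.univ (fun i => Set.Icc (tt i) (tt i + 1)),
        ?_, ?_, ?_⟩
      · exact (hZmeas measurableSet_Icc).inter
          (hNmeas (MeasurableSet.univ_pi fun i => measurableSet_Icc))
      · rw [hindep.measure_inter_preimage_eq_mul _ _ measurableSet_Icc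
          (MeasurableSet.univ_pi fun i => measurableSet_Icc)]
        exact ENNReal.mul_pos hIcc.ne' (hNpi tt).ne'
      · rintro ω ⟨hZω, hNω⟩
        simp only [Set.mem_preimage, Set.mem_Icc] at hZω
        have hNω' : ∀ i, tt i ≤ N ω i ∧ N ω i ≤ tt i + 1 := by
          intro i
          have := hNω i (Set.mem_univ i)
          simpa using this
        -- lower bound on S ω
        have hSlow : s * T ≤ S ω := by
          have hterm : ∀ j ∈ Finset.univ, s * |w j| ≤ w j * N ω j := by
            intro j _
            rcases le_or_gt 0 (w j) with hwj | hwj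
            · have h1 : s ≤ N ω j := by
                have := (hNω' j).1
                simp only [httdef, if_pos hwj] at this
                exact this
              calc s * |w j| = w j * s := by rw [abs_of_nonneg hwj]; ring
                _ ≤ w j * N ω j := mul_le_mul_of_nonneg_left h1 hwj
            · have h1 : N ω j ≤ -s := by
                have := (hNω' j).2
                simp only [httdef, if_neg (not_le.mpr hwj)] at this
                linarith
              calc s * |w j| = w j * (-s) := by rw [abs_of_neg hwj]; ring
                _ ≤ w j * N ω j := by nlinarith
          calc s * T = ∑ j, s * |w j| := by rw [hTdef, Finset.mul_sum]
            _ ≤ ∑ j, w j * N ω j := Finset.sum_le_sum hterm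
            _ = S ω := rfl
        have hST : 0 ≤ s * T := mul_nonneg hs0 hTpos.le
        have hsqZ : Real.sqrt k ≤ Real.sqrt (Z ω) := Real.sqrt_le_sqrt hZω.1
        have h2 : Real.sqrt k * (s * T) ≤ Real.sqrt (Z ω) * S ω := by
          calc Real.sqrt k * (s * T) ≤ Real.sqrt k * S ω :=
                mul_le_mul_of_nonneg_left hSlow hsk.le
            _ ≤ Real.sqrt (Z ω) * S ω :=
                mul_le_mul_of_nonneg_right hsqZ (le_trans hST hSlow)
        have h3 : 1 + |b| * K - a ≤ Real.sqrt k * (s * T) := by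
          rcases le_or_gt (1 + |b| * K - a) 0 with hc | hc
          · calc 1 + |b| * K - a ≤ 0 := hc
              _ ≤ Real.sqrt k * (s * T) := mul_nonneg hsk.le hST
          · have hq0 : q ≤ s := le_max_right _ _
            have hpos : 0 < Real.sqrt k * T := mul_pos hsk hTpos
            calc 1 + |b| * K - a = (Real.sqrt k * T) * q := by
                  rw [hqdef, mul_div_cancel₀ _ hpos.ne']
              _ ≤ (Real.sqrt k * T) * s := mul_le_mul_of_nonneg_left hq0 hpos.le
              _ = Real.sqrt k * (s * T) := by ring
        have h4 : -(|b| * K) ≤ b * Z ω := by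
          have h5 : |b * Z ω| ≤ |b| * K := by
            rw [abs_mul, abs_of_nonneg (hZnonneg ω)]
            exact mul_le_mul_of_nonneg_left hZω.2 (abs_nonneg b)
          linarith [neg_abs_le (b * Z ω)]
        rw [hYeq ω]
        linarith [le_trans h3 h2]
    · -- Case A : Z = 0 with positive probability
      refine ⟨a, hapos, Z ⁻¹' {0}, hZmeas (measurableSet_singleton 0),
        pos_iff_ne_zero.mpr h0, ?_⟩
      intro ω hω
      simp only [Set.mem_preimage, Set.mem_singleton_iff] at hω
      rw [hYeq ω, hω]
      simp
  -- final step : push wealth to infinity along x = t • v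
  rw [iSup_eq_top]
  intro c hc
  obtain ⟨r, hcr, -⟩ := EReal.exists_between_coe_real hc
  obtain ⟨m, hm⟩ := hUbdd
  have hmU : ∀ y : ℝ, m ≤ U y := fun y => hm (Set.mem_range_self y)
  set p : ℝ := (P E).toReal with hpdef
  have hp : 0 < p := ENNReal.toReal_pos hPE.ne' (measure_ne_top P E)
  set M : ℝ := (|r| + |m| + 1) / p with hMdef
  have hMpos : 0 < M := by positivity
  obtain ⟨w₀, hw₀⟩ := eventually_atTop.mp (tendsto_atTop.mp hUtop M)
  set c0 : ℝ := W0 * (1 + rf) with hc0def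
  set t : ℝ := max 0 ((w₀ - c0) / (W0 * ε)) with htdef
  have ht0 : 0 ≤ t := le_max_left _ _
  have hWtε : w₀ ≤ c0 + W0 * t * ε := by
    have h1 : (w₀ - c0) / (W0 * ε) ≤ t := le_max_right _ _
    have h2 : 0 < W0 * ε := mul_pos hW0 hε
    rw [div_le_iff₀ h2] at h1
    have h3 : t * (W0 * ε) = W0 * t * ε := by ring
    linarith
  have hMU : M ≤ U (c0 + W0 * t * ε) := hw₀ _ hWtε
  refine ⟨fun i => t * v i, lt_of_lt_of_le hcr ?_⟩
  have hwe : ∀ ω, wealth μ γ A Z N rf W0 (fun i => t * v i) ω = c0 + W0 * t * Y ω := by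
    intro ω
    simp only [wealth, hYdef, hc0def]
    rw [show ∑ i, t * v i * (nmvmX μ γ A Z N ω i - rf)
        = t * ∑ i, v i * (nmvmX μ γ A Z N ω i - rf) by
      rw [Finset.mul_sum]; exact Finset.sum_congr rfl fun i _ => by ring]
    ring
  simp only [hwe]
  set f : Ω → ℝ := fun ω => U (c0 + W0 * t * Y ω) with hfdef
  have hfm : ∀ ω, m ≤ f ω := fun ω => hmU _
  have hneg : ∫⁻ ω, ENNReal.ofReal (-(f ω)) ∂P ≤ ENNReal.ofReal (-m) := by
    calc ∫⁻ ω, ENNReal.ofReal (-(f ω)) ∂P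
        ≤ ∫⁻ _, ENNReal.ofReal (-m) ∂P :=
          lintegral_mono fun ω => ENNReal.ofReal_le_ofReal (by linarith [hfm ω])
      _ = ENNReal.ofReal (-m) := by simp
  have hposI : ENNReal.ofReal M * P E ≤ ∫⁻ ω, ENNReal.ofReal (f ω) ∂P := by
    have hind : ∀ ω, E.indicator (fun _ => ENNReal.ofReal M) ω ≤ ENNReal.ofReal (f ω) := by
      intro ω
      rcases Classical.em (ω ∈ E) with hω | hω
      · rw [Set.indicator_of_mem hω]
        refine ENNReal.ofReal_le_ofReal (le_trans hMU (hUmono ?_))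
        have := hYE ω hω
        nlinarith [mul_nonneg hW0.le ht0]
      · rw [Set.indicator_of_notMem hω]; exact zero_le
    calc ENNReal.ofReal M * P E
        = ∫⁻ ω, E.indicator (fun _ => ENNReal.ofReal M) ω ∂P :=
          (lintegral_indicator_const hEmeas _).symm
      _ ≤ ∫⁻ ω, ENNReal.ofReal (f ω) ∂P := lintegral_mono hind
  -- conclude
  rw [eexp]
  refine le_trans ?_ (EReal.sub_le_sub
    (EReal.coe_ennreal_le_coe_ennreal_iff.mpr hposI)
    (EReal.coe_ennreal_le_coe_ennreal_iff.mpr hneg))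
  have hPEeq : P E = ENNReal.ofReal p := (ENNReal.ofReal_toReal (measure_ne_top P E)).symm
  rw [hPEeq, ← ENNReal.ofReal_mul hMpos.le]
  have hMp : M * p = |r| + |m| + 1 := div_mul_cancel₀ _ hp.ne'
  rw [hMp, EReal.coe_ennreal_ofReal, EReal.coe_ennreal_ofReal,
    max_eq_left (by positivity : (0:ℝ) ≤ |r| + |m| + 1)]
  have hmaxm : max (-m) 0 ≤ |m| := max_le (neg_le_abs m) (abs_nonneg m)
  have hfin : (r:ℝ) ≤ |r| + |m| + 1 - max (-m) 0 := by
    have := le_abs_self r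
    linarith
  calc (r : EReal) ≤ ((|r| + |m| + 1 - max (-m) 0 : ℝ) : EReal) := by
        exact_mod_cast hfin
    _ = ((|r| + |m| + 1 : ℝ) : EReal) - ((max (-m) 0 : ℝ) : EReal) := by
        rw [← EReal.coe_sub]
    _ ≤ _ := le_refl _

end
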